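/- Let n ≥ 1, let p : Fin n → ℝ be a probability vector (p_i ≥ 0 for all i and Σ_i p_i = 1), let ξ : Fin n → ℝ, and let α ∈ (0,1]. Then inf_{z ∈ ℝ} { z + (1/α) Σ_i p_i · max(ξ_i − z, 0) } = sup { Σ_i q_i ξ_i : q : Fin n → ℝ, q_i ≥ 0 for all i, Σ_i q_i = 1, q_i ≤ p_i/α for all i }; i.e., the variational form of CVaR equals its dual representation as a maximum of expectations over the CVaR ambiguity set. -/

import Mathlib

open Finset

private lemma cvar_weak {n : ℕ} (p ξ q : Fin n → ℝ) (α z : ℝ)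
    (hq0 : ∀ i, 0 ≤ q i) (hq1 : ∑ i, q i = 1) (hqp : ∀ i, q i ≤ p i / α) :
    ∑ i, q i * ξ i ≤ z + (1 / α) * ∑ i, p i * max (ξ i - z) 0 := by
  have h1 : ∑ i, q i * ξ i = z + ∑ i, q i * (ξ i - z) := by
    have h : ∀ i ∈ Finset.univ, q i * ξ i = q i * z + q i * (ξ i - z) := by
      intro i _; ring
    rw [Finset.sum_congr rfl h, Finset.sum_add_distrib, ← Finset.sum_mul, hq1, one_mul]
  rw [h1]
  have h2 : (1 / α) * ∑ i, p i * max (ξ i - z) 0 = ∑ i, (p i / α) * max (ξ i - z) 0 := by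
    rw [Finset.mul_sum]; apply Finset.sum_congr rfl; intro i _; ring
  rw [h2]
  gcongr z + ?_
  apply Finset.sum_le_sum
  intro i _
  calc q i * (ξ i - z) ≤ q i * max (ξ i - z) 0 := by
        apply mul_le_mul_of_nonneg_left (le_max_left _ _) (hq0 i)
    _ ≤ (p i / α) * max (ξ i - z) 0 := by
        apply mul_le_mul_of_nonneg_right (hqp i) (le_max_right _ _)

private lemma cvar_strong (n : ℕ) (hn : 1 ≤ n) (p ξ : Fin n → ℝ)
    (hp : ∀ i, 0 ≤ p i) (hsum : ∑ i, p i = 1) (α : ℝ) (hα : α ∈ Set.Ioc (0 : ℝ) 1) :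
    ∃ z : ℝ, ∃ q : Fin n → ℝ, (∀ i, 0 ≤ q i) ∧ (∑ i, q i = 1) ∧ (∀ i, q i ≤ p i / α) ∧
      z + (1 / α) * ∑ i, p i * max (ξ i - z) 0 = ∑ i, q i * ξ i := by
  obtain ⟨hα0, hα1⟩ := hα
  have hαne : α ≠ 0 := ne_of_gt hα0
  set R : Finset ℝ := Finset.image ξ Finset.univ with hR
  have i0 : Fin n := ⟨0, hn⟩
  set T : Finset ℝ := R.filter (fun z => α ≤ ∑ i, if z ≤ ξ i then p i else 0) with hT
  have hRne : R.Nonempty := ⟨ξ i0, Finset.mem_image_of_mem ξ (Finset.mem_univ i0)⟩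
  have hTne : T.Nonempty := by
    refine ⟨R.min' hRne, Finset.mem_filter.mpr ⟨R.min'_mem hRne, ?_⟩⟩
    have h : ∀ i, (if R.min' hRne ≤ ξ i then p i else 0) = p i := by
      intro i
      rw [if_pos (R.min'_le (ξ i) (Finset.mem_image_of_mem ξ (Finset.mem_univ i)))]
    rw [Finset.sum_congr rfl (fun i _ => h i), hsum]; exact hα1
  set z₀ : ℝ := T.max' hTne with hz₀
  have hz₀T : z₀ ∈ T := T.max'_mem hTne
  have hz₀good : α ≤ ∑ i, if z₀ ≤ ξ i then p i else 0 := (Finset.mem_filter.mp hz₀T).2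
  set S : ℝ := ∑ i, if z₀ < ξ i then p i else 0 with hSdef
  set M : ℝ := ∑ i, if ξ i = z₀ then p i else 0 with hMdef
  have hS0 : 0 ≤ S := Finset.sum_nonneg fun i _ => by
    split_ifs with h
    · exact hp i
    · exact le_refl 0
  have hSM : α ≤ S + M := by
    have h : S + M = ∑ i, if z₀ ≤ ξ i then p i else 0 := by
      rw [hSdef, hMdef, ← Finset.sum_add_distrib]
      apply Finset.sum_congr rfl
      intro i _
      rcases lt_trichotomy z₀ (ξ i) with h | h | h
      · rw [if_pos h, if_neg (ne_of_gt h), if_pos h.le, add_zero]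
      · have hn1 : ¬ z₀ < ξ i := by rw [h]; exact lt_irrefl _
        rw [if_neg hn1, if_pos h.symm, if_pos h.le, zero_add]
      · rw [if_neg (asymm h), if_neg (ne_of_lt h), if_neg (not_le.mpr h), add_zero]
    rw [h]; exact hz₀good
  have hSα : S < α := by
    by_cases hA : ∃ i, z₀ < ξ i
    · set A : Finset (Fin n) := Finset.univ.filter (fun i => z₀ < ξ i) with hAdef
      have hAne : A.Nonempty := by
        obtain ⟨i, hi⟩ := hA
        exact ⟨i, Finset.mem_filter.mpr ⟨Finset.mem_univ i, hi⟩⟩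
      obtain ⟨j, hjA, hjmin⟩ := A.exists_min_image ξ hAne
      have hjz : z₀ < ξ j := (Finset.mem_filter.mp hjA).2
      by_contra hcon
      push_neg at hcon
      have hkey : ∀ i, (if ξ j ≤ ξ i then p i else 0) = (if z₀ < ξ i then p i else 0) := by
        intro i
        by_cases hi : z₀ < ξ i
        · rw [if_pos hi, if_pos (hjmin i (Finset.mem_filter.mpr ⟨Finset.mem_univ i, hi⟩))]
        · rw [if_neg hi, if_neg (fun h => hi (lt_of_lt_of_le hjz h))]
      have hjT : ξ j ∈ T := by
        refine Finset.mem_filter.mpr ⟨Finset.mem_image_of_mem ξ (Finset.mem_univ j), ?_⟩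
        rw [Finset.sum_congr rfl (fun i _ => hkey i)]
        exact hcon
      exact absurd (T.le_max' (ξ j) hjT) (not_le.mpr hjz)
    · push_neg at hA
      have h0 : S = 0 := Finset.sum_eq_zero fun i _ => if_neg (not_lt.mpr (hA i))
      rw [h0]; exact hα0
  have hM : 0 < M := by linarith
  set c : ℝ := (α - S) / (α * M) with hc
  have hc0 : 0 ≤ c := div_nonneg (by linarith) (by positivity)
  have hMc : M * c = (α - S) / α := by
    rw [hc]; field_simp
  have hc1 : c ≤ 1 / α := by
    rw [hc, div_le_div_iff₀ (by positivity) hα0]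
    nlinarith
  set q : Fin n → ℝ := fun i =>
    if z₀ < ξ i then p i / α else if ξ i = z₀ then p i * c else 0 with hq
  have hq0 : ∀ i, 0 ≤ q i := by
    intro i
    rw [hq]
    dsimp only
    split_ifs with h1 h2
    · exact div_nonneg (hp i) hα0.le
    · exact mul_nonneg (hp i) hc0
    · exact le_refl 0
  have hq1 : ∑ i, q i = 1 := by
    have h : ∀ i ∈ Finset.univ, q i =
        (if z₀ < ξ i then p i else 0) / α + (if ξ i = z₀ then p i else 0) * c := by
      intro i _
      rw [hq]
      dsimp only
      rcases lt_trichotomy z₀ (ξ i) with h | h | h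
      · rw [if_pos h, if_pos h, if_neg (ne_of_gt h), zero_mul, add_zero]
      · have hn1 : ¬ z₀ < ξ i := by rw [h]; exact lt_irrefl _
        rw [if_neg hn1, if_neg hn1, if_pos h.symm, if_pos h.symm, zero_div, zero_add]
      · rw [if_neg (asymm h), if_neg (asymm h), if_neg (ne_of_lt h), if_neg (ne_of_lt h),
          zero_div, zero_mul, add_zero]
    rw [Finset.sum_congr rfl h, Finset.sum_add_distrib, ← Finset.sum_div, ← Finset.sum_mul,
      ← hSdef, ← hMdef, hMc]
    field_simp
    ring
  have hqle : ∀ i, q i ≤ p i / α := by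
    intro i
    rw [hq]
    dsimp only
    split_ifs with h1 h2
    · exact le_refl _
    · calc p i * c ≤ p i * (1 / α) := mul_le_mul_of_nonneg_left hc1 (hp i)
        _ = p i / α := by ring
    · exact div_nonneg (hp i) hα0.le
  refine ⟨z₀, q, hq0, hq1, hqle, ?_⟩
  have hval : ∑ i, q i * ξ i =
      (∑ i, if z₀ < ξ i then p i * ξ i else 0) / α + M * (c * z₀) := by
    have h : ∀ i ∈ Finset.univ, q i * ξ i =
        (if z₀ < ξ i then p i * ξ i else 0) / α + (if ξ i = z₀ then p i else 0) * (c * z₀) := by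
      intro i _
      rw [hq]
      dsimp only
      rcases lt_trichotomy z₀ (ξ i) with h | h | h
      · rw [if_pos h, if_pos h, if_neg (ne_of_gt h), zero_mul, add_zero]; ring
      · have hn1 : ¬ z₀ < ξ i := by rw [h]; exact lt_irrefl _
        rw [if_neg hn1, if_neg hn1, if_pos h.symm, if_pos h.symm, zero_div, zero_add, ← h]
        ring
      · rw [if_neg (asymm h), if_neg (asymm h), if_neg (ne_of_lt h), if_neg (ne_of_lt h),
          zero_div, zero_mul, zero_add, zero_mul]
    rw [Finset.sum_congr rfl h, Finset.sum_add_distrib, ← Finset.sum_div, ← Finset.sum_mul,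
      ← hMdef]
  have hmaxsum : ∑ i, p i * max (ξ i - z₀) 0 =
      (∑ i, if z₀ < ξ i then p i * ξ i else 0) - S * z₀ := by
    have h : ∀ i ∈ Finset.univ, p i * max (ξ i - z₀) 0 =
        (if z₀ < ξ i then p i * ξ i else 0) - (if z₀ < ξ i then p i else 0) * z₀ := by
      intro i _
      by_cases hi : z₀ < ξ i
      · rw [if_pos hi, if_pos hi, max_eq_left (by linarith)]; ring
      · rw [if_neg hi, if_neg hi, max_eq_right (by push_neg at hi; linarith), zero_mul,
          mul_zero, sub_zero]
    rw [Finset.sum_congr rfl h, Finset.sum_sub_distrib, ← Finset.sum_mul, ← hSdef]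
  rw [hval, hmaxsum, ← mul_assoc, hMc]
  field_simp
  ring

/-- The variational (Rockafellar–Uryasev) form of the discrete CVaR equals its dual
representation as a supremum of expectations over the CVaR ambiguity set. -/
theorem cvar_variational_eq_dual (n : ℕ) (hn : 1 ≤ n) (p ξ : Fin n → ℝ)
    (hp : ∀ i, 0 ≤ p i) (hsum : ∑ i, p i = 1) (α : ℝ) (hα : α ∈ Set.Ioc (0 : ℝ) 1) :
    sInf {v : ℝ | ∃ z : ℝ, v = z + (1 / α) * ∑ i, p i * max (ξ i - z) 0}
      = sSup {v : ℝ | ∃ q : Fin n → ℝ, (∀ i, 0 ≤ q i) ∧ (∑ i, q i = 1) ∧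
          (∀ i, q i ≤ p i / α) ∧ v = ∑ i, q i * ξ i} := by
  obtain ⟨hα0, hα1⟩ := hα
  set F := {v : ℝ | ∃ z : ℝ, v = z + (1 / α) * ∑ i, p i * max (ξ i - z) 0} with hF
  set D := {v : ℝ | ∃ q : Fin n → ℝ, (∀ i, 0 ≤ q i) ∧ (∑ i, q i = 1) ∧
      (∀ i, q i ≤ p i / α) ∧ v = ∑ i, q i * ξ i} with hD
  have hpfeas : ∀ i, p i ≤ p i / α := by
    intro i
    rw [le_div_iff₀ hα0]
    nlinarith [hp i]
  have hDne : D.Nonempty := ⟨∑ i, p i * ξ i, p, hp, hsum, hpfeas, rfl⟩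
  have hFne : F.Nonempty := ⟨0 + (1 / α) * ∑ i, p i * max (ξ i - 0) 0, 0, rfl⟩
  -- every element of D is ≤ every element of F
  have hweak : ∀ d ∈ D, ∀ f ∈ F, d ≤ f := by
    rintro d ⟨q, hq0, hq1, hqp, rfl⟩ f ⟨z, rfl⟩
    exact cvar_weak p ξ q α z hq0 hq1 hqp
  have hFbdd : BddBelow F := by
    obtain ⟨d, hd⟩ := hDne
    exact ⟨d, fun f hf => hweak d hd f hf⟩
  have hDbdd : BddAbove D := by
    obtain ⟨f, hf⟩ := hFne
    exact ⟨f, fun d hd => hweak d hd f hf⟩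
  obtain ⟨z₀, q, hq0, hq1, hqp, heq⟩ := cvar_strong n hn p ξ hp hsum α ⟨hα0, hα1⟩
  apply le_antisymm
  · calc sInf F ≤ z₀ + (1 / α) * ∑ i, p i * max (ξ i - z₀) 0 := csInf_le hFbdd ⟨z₀, rfl⟩
      _ = ∑ i, q i * ξ i := heq
      _ ≤ sSup D := le_csSup hDbdd ⟨q, hq0, hq1, hqp, rfl⟩
  · exact csSup_le hDne fun d hd => le_csInf hFne fun f hf => hweak d hd f hf
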